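/- Let p̲ ≤ p̄ be reals, p₀ ∈ ℝ, α > 0, and ε > 0. Define the smoothed response p^ε(Δ) := p̲ + ε·ln[1 + exp((p̄ − p̲)/ε)/(1 + exp((p̄ − p₀ − αΔ)/ε))] and the true response p(Δ) := proj_{[p̲,p̄]}(p₀ + αΔ). Then sup over Δ ∈ ℝ of |p^ε(Δ) − p(Δ)| is at most 2ε·ln 2; in particular it converges to 0 as ε → 0⁺. -/

import Mathlib

theorem smoothed_projection_response_approx
    (plo phi p0 α ε : ℝ) (h : plo ≤ phi) (hα : 0 < α) (hε : 0 < ε) :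
    ∀ Δ : ℝ,
      |(plo + ε * Real.log (1 + Real.exp ((phi - plo) / ε) /
          (1 + Real.exp ((phi - p0 - α * Δ) / ε)))) -
        min phi (max plo (p0 + α * Δ))| ≤ 2 * ε * Real.log 2 := by
  intro Δ
  set a : ℝ := (phi - plo) / ε with ha
  set b : ℝ := (phi - p0 - α * Δ) / ε with hb
  set w : ℝ := p0 + α * Δ with hw
  have hεa : ε * a = phi - plo := by
    rw [ha]; field_simp
  have hεb : ε * b = phi - w := by
    rw [hb, hw]; field_simp; ring
  set S : ℝ := 1 + Real.exp b + Real.exp a with hSdef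
  set T : ℝ := 1 + Real.exp b with hTdef
  have hT : 0 < T := by positivity
  have hS : 0 < S := by positivity
  have hlog : Real.log (1 + Real.exp a / T) = Real.log S - Real.log T := by
    have : 1 + Real.exp a / T = S / T := by
      field_simp [hSdef]; linarith [hSdef]
    rw [this, Real.log_div hS.ne' hT.ne']
  set M : ℝ := max 0 (max a b) with hM
  set N : ℝ := max 0 b with hN
  have hexp_le : ∀ c : ℝ, Real.exp c ≤ S → c ≤ Real.log S := by
    intro c hc
    calc c = Real.log (Real.exp c) := (Real.log_exp c).symm
    _ ≤ Real.log S := Real.log_le_log (Real.exp_pos c) hc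
  have hexp_leT : ∀ c : ℝ, Real.exp c ≤ T → c ≤ Real.log T := by
    intro c hc
    calc c = Real.log (Real.exp c) := (Real.log_exp c).symm
    _ ≤ Real.log T := Real.log_le_log (Real.exp_pos c) hc
  have L1 : M ≤ Real.log S := by
    refine max_le ?_ (max_le ?_ ?_)
    · exact Real.log_nonneg (by nlinarith [Real.exp_pos a, Real.exp_pos b])
    · exact hexp_le a (by nlinarith [Real.exp_pos b])
    · exact hexp_le b (by nlinarith [Real.exp_pos a])
  have hMa : a ≤ M := le_max_of_le_right (le_max_left _ _)
  have hMb : b ≤ M := le_max_of_le_right (le_max_right _ _)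
  have hM0 : (0:ℝ) ≤ M := le_max_left _ _
  have hNb : b ≤ N := le_max_right _ _
  have hN0 : (0:ℝ) ≤ N := le_max_left _ _
  have U1 : Real.log S ≤ M + Real.log 3 := by
    have hle : S ≤ 3 * Real.exp M := by
      have h1 : (1:ℝ) ≤ Real.exp M := by
        simpa using Real.exp_le_exp.mpr hM0
      have h2 : Real.exp a ≤ Real.exp M := Real.exp_le_exp.mpr hMa
      have h3 : Real.exp b ≤ Real.exp M := Real.exp_le_exp.mpr hMb
      nlinarith
    calc Real.log S ≤ Real.log (3 * Real.exp M) := Real.log_le_log hS hle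
    _ = Real.log 3 + M := by rw [Real.log_mul (by norm_num) (Real.exp_pos M).ne', Real.log_exp]
    _ = M + Real.log 3 := by ring
  have L2 : N ≤ Real.log T := by
    refine max_le ?_ ?_
    · exact Real.log_nonneg (by nlinarith [Real.exp_pos b])
    · exact hexp_leT b (by nlinarith)
  have U2 : Real.log T ≤ N + Real.log 2 := by
    have hle : T ≤ 2 * Real.exp N := by
      have h1 : (1:ℝ) ≤ Real.exp N := by
        simpa using Real.exp_le_exp.mpr hN0
      have h3 : Real.exp b ≤ Real.exp N := Real.exp_le_exp.mpr hNb
      nlinarith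
    calc Real.log T ≤ Real.log (2 * Real.exp N) := Real.log_le_log hT hle
    _ = Real.log 2 + N := by rw [Real.log_mul (by norm_num) (Real.exp_pos N).ne', Real.log_exp]
    _ = N + Real.log 2 := by ring
  have hclamp : min phi (max plo w) = plo + ε * (M - N) := by
    have ha0 : (0:ℝ) ≤ a := div_nonneg (by linarith) hε.le
    rw [hM, hN]
    rcases le_total w plo with h1 | h1
    · have hab : a ≤ b := by
        rw [ha, hb]
        exact (div_le_div_iff_of_pos_right hε).mpr (by linarith)
      have hb0 : (0:ℝ) ≤ b := ha0.trans hab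
      rw [max_eq_left h1, min_eq_right h, max_eq_right hab,
          max_eq_right hb0]
      ring
    · rcases le_total w phi with h2 | h2
      · have hba : b ≤ a := by
          rw [ha, hb]
          exact (div_le_div_iff_of_pos_right hε).mpr (by linarith)
        have hb0 : (0:ℝ) ≤ b := by
          have h3 : 0 ≤ phi - p0 - α * Δ := by rw [hw] at h2; linarith
          rw [hb]; exact div_nonneg h3 hε.le
        rw [max_eq_right h1, min_eq_right h2, max_eq_left hba,
            max_eq_right ha0, max_eq_right hb0, mul_sub, hεa, hεb]
        ring
      · have hba : b ≤ a := by
          rw [ha, hb]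
          exact (div_le_div_iff_of_pos_right hε).mpr (by linarith)
        have hb0 : b ≤ 0 := by
          rw [hb]
          have h3 : phi - p0 - α * Δ ≤ 0 := by rw [hw] at h2; linarith
          exact div_nonpos_of_nonpos_of_nonneg h3 hε.le
        rw [max_eq_right h1, min_eq_left h2, max_eq_left hba,
            max_eq_right ha0, max_eq_left hb0, sub_zero, hεa]
        ring
  rw [hlog, hclamp]
  have hkey : plo + ε * (Real.log S - Real.log T) - (plo + ε * (M - N))
      = ε * ((Real.log S - M) - (Real.log T - N)) := by ring
  rw [hkey, abs_mul, abs_of_pos hε]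
  have hlog2 : (0:ℝ) ≤ Real.log 2 := Real.log_nonneg (by norm_num)
  have hlog34 : Real.log 3 ≤ 2 * Real.log 2 := by
    have : Real.log 3 ≤ Real.log 4 := Real.log_le_log (by norm_num) (by norm_num)
    have h4 : Real.log 4 = 2 * Real.log 2 := by
      rw [show (4:ℝ) = 2 ^ 2 by norm_num, Real.log_pow]
      push_cast; ring
    linarith
  have habs : |(Real.log S - M) - (Real.log T - N)| ≤ 2 * Real.log 2 := by
    rw [abs_le]
    constructor <;> linarith
  calc ε * |(Real.log S - M) - (Real.log T - N)| ≤ ε * (2 * Real.log 2) :=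
        mul_le_mul_of_nonneg_left habs hε.le
  _ = 2 * ε * Real.log 2 := by ring
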